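/- A pencil B(λ) ∈ F[λ]^{(q+1)n×(p+1)n}, viewed as a (q+1)×(p+1) block-pencil with n×n blocks, satisfies B(λ)(Λ_p(λ)^T ⊗ I_n) = 0 if and only if there exist matrices B_{ij} ∈ F^{n×n} (i = 1,...,q+1, j = 1,...,p) such that the first block-column of B(λ) is [B_{i1}]_i, the j-th block-column for 2 ≤ j ≤ p is [−λ B_{i,j−1} + B_{ij}]_i, and the last block-column is [−λ B_{ip}]_i. -/

import Mathlib

open Polynomial Matrix Kronecker

/-- The row vector `Λ_p(λ) = [λ^p, λ^{p-1}, ..., λ, 1]`. -/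
noncomputable def LamPoly (F : Type*) [Field F] (p : ℕ) :
    Matrix (Fin 1) (Fin (p+1)) (Polynomial F) :=
  Matrix.of fun _ j => X ^ (p - (j : ℕ))

lemma wing_key (F : Type*) [Field F] (p : ℕ) (f : Fin (p+1) → Polynomial F)
    (hd : ∀ j, (f j).natDegree ≤ 1)
    (hS : ∑ j : Fin (p+1), f j * X ^ (p - (j:ℕ)) = 0) :
    (f 0).coeff 1 = 0 ∧ (f (Fin.last p)).coeff 0 = 0 ∧
    ∀ (j : ℕ) (h : j < p),
      (f ⟨j, by omega⟩).coeff 0 + (f ⟨j+1, by omega⟩).coeff 1 = 0 := by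
  refine ⟨?_, ?_, ?_⟩
  · have h1 := congrArg (fun q => q.coeff (p+1)) hS
    simp only [finset_sum_coeff, coeff_zero] at h1
    rw [Finset.sum_congr rfl (g := fun j : Fin (p+1) =>
        if j = 0 then (f 0).coeff 1 else 0) ?_] at h1
    · simpa using h1
    · intro j _
      rw [coeff_mul_X_pow']
      have hjle : (j:ℕ) ≤ p := Nat.lt_succ_iff.mp j.2
      by_cases hj : j = 0
      · subst hj; simp
      · have hj' : (j:ℕ) ≠ 0 := fun h => hj (Fin.ext h)
        rw [if_pos (by omega), if_neg hj]
        exact coeff_eq_zero_of_natDegree_lt (lt_of_le_of_lt (hd j) (by omega))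
  · have h1 := congrArg (fun q => q.coeff 0) hS
    simp only [finset_sum_coeff, coeff_zero] at h1
    rw [Finset.sum_congr rfl (g := fun j : Fin (p+1) =>
        if j = Fin.last p then (f (Fin.last p)).coeff 0 else 0) ?_] at h1
    · simpa using h1
    · intro j _
      rw [coeff_mul_X_pow']
      have hjle : (j:ℕ) ≤ p := Nat.lt_succ_iff.mp j.2
      by_cases hj : j = Fin.last p
      · subst hj; simp
      · have hj' : (j:ℕ) ≠ p := fun h => hj (Fin.ext h)
        rw [if_neg (by omega), if_neg hj]
  · intro j0 hj0
    have h1 := congrArg (fun q => q.coeff (p - j0)) hS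
    simp only [finset_sum_coeff, coeff_zero] at h1
    rw [Finset.sum_congr rfl (g := fun j : Fin (p+1) =>
        (if j = (⟨j0, by omega⟩ : Fin (p+1)) then (f ⟨j0, by omega⟩).coeff 0 else 0) +
        (if j = (⟨j0+1, by omega⟩ : Fin (p+1)) then (f ⟨j0+1, by omega⟩).coeff 1 else 0)) ?_] at h1
    · rw [Finset.sum_add_distrib] at h1
      simpa using h1
    · intro j _
      rw [coeff_mul_X_pow']
      have hjle : (j:ℕ) ≤ p := Nat.lt_succ_iff.mp j.2
      by_cases hja : j = (⟨j0, by omega⟩ : Fin (p+1))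
      · have hv : (j:ℕ) = j0 := by rw [hja]
        rw [if_pos (show p - (j:ℕ) ≤ p - j0 by omega), if_pos hja,
          if_neg (show j ≠ _ by rw [hja]; simp only [ne_eq, Fin.mk.injEq]; omega),
          add_zero, hja]
        congr 1
        simp only [Fin.val_mk]
        omega
      · by_cases hjb : j = (⟨j0+1, by omega⟩ : Fin (p+1))
        · have hv : (j:ℕ) = j0+1 := by rw [hjb]
          rw [if_pos (show p - (j:ℕ) ≤ p - j0 by omega), if_neg hja, if_pos hjb,
            zero_add, hjb]
          congr 1
          simp only [Fin.val_mk]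
          omega
        · rw [if_neg hja, if_neg hjb, add_zero]
          have hja' : (j:ℕ) ≠ j0 := fun h => hja (Fin.ext h)
          have hjb' : (j:ℕ) ≠ j0+1 := fun h => hjb (Fin.ext h)
          by_cases hc : p - (j:ℕ) ≤ p - j0
          · rw [if_pos hc]
            exact coeff_eq_zero_of_natDegree_lt (lt_of_le_of_lt (hd j) (by omega))
          · rw [if_neg hc]

theorem generalized_wing_pencil_structure (F : Type*) [Field F] (n p q : ℕ)
    (B : Matrix (Fin (q+1) × Fin n) (Fin (p+1) × Fin n) (Polynomial F))
    (hpencil : ∀ r c, (B r c).natDegree ≤ 1) :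
    B * ((LamPoly F p)ᵀ ⊗ₖ (1 : Matrix (Fin n) (Fin n) (Polynomial F))) = 0 ↔
    ∃ Bm : Fin (q+1) → Fin p → Matrix (Fin n) (Fin n) F,
      ∀ (i : Fin (q+1)) (a : Fin n) (j : Fin (p+1)) (b : Fin n),
        B (i, a) (j, b) =
          (if h : (j : ℕ) < p then Polynomial.C (Bm i ⟨j, h⟩ a b) else 0) -
          (if h : 0 < (j : ℕ) then
            Polynomial.X * Polynomial.C (Bm i ⟨(j : ℕ) - 1, by omega⟩ a b) else 0) := by
  have hentry : ∀ (i : Fin (q+1)) (a : Fin n) (k : Fin 1) (c : Fin n),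
      (B * ((LamPoly F p)ᵀ ⊗ₖ (1 : Matrix (Fin n) (Fin n) (Polynomial F)))) (i,a) (k,c)
        = ∑ j : Fin (p+1), B (i,a) (j,c) * X ^ (p - (j:ℕ)) := by
    intro i a k c
    simp [Matrix.mul_apply, Fintype.sum_prod_type, LamPoly, Matrix.one_apply,
      mul_ite, mul_comm]
  constructor
  · intro h
    refine ⟨fun i j a b => (B (i,a) (⟨(j:ℕ), by omega⟩, b)).coeff 0, ?_⟩
    intro i a j b
    have hS : ∑ j' : Fin (p+1), B (i,a) (j',b) * X ^ (p - (j':ℕ)) = 0 := by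
      rw [← hentry i a 0 b, h]; rfl
    obtain ⟨k1, k2, k3⟩ := wing_key F p (fun j' => B (i,a) (j',b))
      (fun j' => hpencil _ _) hS
    have hdeg := hpencil (i,a) (j,b)
    rw [eq_X_add_C_of_natDegree_le_one hdeg]
    have hjle : (j:ℕ) ≤ p := Nat.lt_succ_iff.mp j.2
    have e0 : Polynomial.C ((B (i,a) (j,b)).coeff 0) =
        (if h : (j : ℕ) < p then
          Polynomial.C ((B (i,a) (⟨(j:ℕ), by omega⟩, b)).coeff 0) else 0) := by
      split
      · congr 2
      · have hv : j = Fin.last p := Fin.ext (by simpa using by omega)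
        rw [hv] at *
        simpa using congrArg Polynomial.C k2
    have e1 : Polynomial.C ((B (i,a) (j,b)).coeff 1) * X =
        - (if h : 0 < (j : ℕ) then
          Polynomial.X * Polynomial.C ((B (i,a) (⟨(j:ℕ) - 1, by omega⟩, b)).coeff 0) else 0) := by
      split
      · rename_i hpos
        have hrel := k3 ((j:ℕ) - 1) (by omega)
        have hc1 : (B (i,a) (j,b)).coeff 1 =
            - (B (i,a) (⟨(j:ℕ)-1, by omega⟩, b)).coeff 0 := by
          have hj' : (⟨(j:ℕ)-1+1, by omega⟩ : Fin (p+1)) = j := Fin.ext (by simp; omega)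
          rw [hj'] at hrel
          exact eq_neg_of_add_eq_zero_right hrel
        rw [hc1, map_neg, neg_mul, mul_comm]
      · rename_i hpos
        have hv : j = 0 := Fin.ext (by simp only [Fin.val_zero]; omega)
        rw [hv, k1]
        simp
    rw [e0, e1]
    ring
  · rintro ⟨Bm, hB⟩
    apply Matrix.ext
    rintro ⟨i,a⟩ ⟨k,c⟩
    rw [hentry i a k c]
    simp only [Matrix.zero_apply]
    calc ∑ j : Fin (p+1), B (i,a) (j,c) * X ^ (p - (j:ℕ))
        = ∑ j : Fin (p+1),
            ((if h : (j : ℕ) < p then Polynomial.C (Bm i ⟨j, h⟩ a c) else 0) * X ^ (p - (j:ℕ)) -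
             (if h : 0 < (j : ℕ) then
               Polynomial.X * Polynomial.C (Bm i ⟨(j:ℕ) - 1, by omega⟩ a c) else 0) * X ^ (p - (j:ℕ))) := by
          refine Finset.sum_congr rfl fun j _ => ?_
          rw [hB i a j c, sub_mul]
      _ = 0 := by
          rw [Finset.sum_sub_distrib, sub_eq_zero]
          rw [Fin.sum_univ_castSucc, Fin.sum_univ_succ]
          simp only [Fin.coe_castSucc, Fin.val_succ, Fin.val_last, Fin.val_zero]
          rw [dif_neg (lt_irrefl p)]
          erw [dif_neg (lt_irrefl 0)]
          rw [zero_mul, zero_mul,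
            add_zero, zero_add]
          refine Finset.sum_congr rfl fun j _ => ?_
          rw [dif_pos j.2, dif_pos (Nat.succ_pos _)]
          have : X * Polynomial.C (Bm i ⟨(j:ℕ)+1-1, by omega⟩ a c) * X ^ (p - ((j:ℕ)+1))
              = Polynomial.C (Bm i ⟨(j:ℕ), by omega⟩ a c) * X ^ (p - (j:ℕ)) := by
            have hj : (j:ℕ) + 1 - 1 = (j:ℕ) := rfl
            rw [mul_comm X, mul_assoc, ← pow_succ']
            congr 2
            omega
          exact this.symm
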